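/- Assume the bipartite Bloch data of the context and that ρ is separable. Then ‖T^{(AB)}‖_tr ≤ √( ((d_A²−d_A)/κ_A)·((d_B²−d_B)/κ_B) ); in particular, when κ_A = κ_B = 2 this gives de Vicente's bound ‖T^{(AB)}‖_tr ≤ √(d_A d_B (d_A−1)(d_B−1)/4). -/

import Mathlib

open Matrix ComplexOrder
open scoped Kronecker

/-- The trace norm `‖A‖_tr = Tr((A†A)^{1/2})` of a complex matrix (the sum of its
singular values). -/
noncomputable def traceNorm {m n : Type*} [Fintype m] [Fintype n] [DecidableEq n]
    (A : Matrix m n ℂ) : ℝ :=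
  ((Matrix.posSemidef_conjTranspose_mul_self A).1.eigenvectorUnitary.1 *
    diagonal (((↑) : ℝ → ℂ) ∘ (√·) ∘ (Matrix.posSemidef_conjTranspose_mul_self A).1.eigenvalues) *
    (star (Matrix.posSemidef_conjTranspose_mul_self A).1.eigenvectorUnitary : Matrix n n ℂ)).trace.re

lemma EuclideanSpace.inner_piLp_equiv_symm {𝕜 ι : Type*} [RCLike 𝕜] [Fintype ι] (x y : ι → 𝕜) :
    inner 𝕜 ((WithLp.equiv 2 (ι → 𝕜)).symm x) ((WithLp.equiv 2 (ι → 𝕜)).symm y) =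
      dotProduct (star x) y := by
  show dotProduct y (star x) = _
  exact dotProduct_comm _ _

lemma cs_dot {n : Type*} [Fintype n] (x y : n → ℂ) :
    ‖dotProduct (star x) y‖ ≤
      Real.sqrt (dotProduct (star x) x).re * Real.sqrt (dotProduct (star y) y).re := by
  calc ‖dotProduct (star x) y‖
      = ‖inner (𝕜 := ℂ) ((WithLp.equiv 2 (n → ℂ)).symm x) ((WithLp.equiv 2 (n → ℂ)).symm y)‖ := by
        rw [EuclideanSpace.inner_piLp_equiv_symm]
    _ ≤ ‖(WithLp.equiv 2 (n → ℂ)).symm x‖ * ‖(WithLp.equiv 2 (n → ℂ)).symm y‖ :=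
        norm_inner_le_norm _ _
    _ = Real.sqrt (dotProduct (star x) x).re * Real.sqrt (dotProduct (star y) y).re := by
        rw [norm_eq_sqrt_re_inner (𝕜 := ℂ), norm_eq_sqrt_re_inner (𝕜 := ℂ),
          EuclideanSpace.inner_piLp_equiv_symm, EuclideanSpace.inner_piLp_equiv_symm]
        simp [RCLike.re_to_complex]

lemma dot_self_nonneg {n : Type*} [Fintype n] (x : n → ℂ) :
    0 ≤ (dotProduct (star x) x).re := by
  simp only [dotProduct, Pi.star_apply, Complex.re_sum]
  refine Finset.sum_nonneg fun i _ => ?_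
  simpa [Complex.normSq] using Complex.normSq_nonneg (x i)

lemma exists_dual {m n : Type*} [Fintype m] [Fintype n] [DecidableEq n]
    (A : Matrix m n ℂ) :
    ∃ X : Matrix m n ℂ,
      Xᴴ * A = ((Matrix.posSemidef_conjTranspose_mul_self A).1.eigenvectorUnitary.1 *
    diagonal (((↑) : ℝ → ℂ) ∘ (√·) ∘ (Matrix.posSemidef_conjTranspose_mul_self A).1.eigenvalues) *
    (star (Matrix.posSemidef_conjTranspose_mul_self A).1.eigenvectorUnitary : Matrix n n ℂ)) ∧
      ∀ u : m → ℂ,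
        (dotProduct (star (Xᴴ *ᵥ u)) (Xᴴ *ᵥ u)).re ≤
          (dotProduct (star u) u).re := by
  have hB : (Aᴴ * A).PosSemidef := Matrix.posSemidef_conjTranspose_mul_self A
  have hH : (Aᴴ * A).IsHermitian := hB.1
  set U : Matrix n n ℂ := (hH.eigenvectorUnitary : Matrix n n ℂ) with hUdef
  set μ : n → ℝ := hH.eigenvalues with hμdef
  have hμ0 : ∀ i, 0 ≤ μ i := hB.eigenvalues_nonneg
  have hUU : Uᴴ * U = 1 := by
    have := hH.eigenvectorUnitary.2
    rw [Matrix.mem_unitaryGroup_iff'] at this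
    exact this
  have hspec : Aᴴ * A = U * Matrix.diagonal (RCLike.ofReal ∘ μ) * Uᴴ := hH.spectral_theorem
  set g : n → ℂ := fun i => if μ i = 0 then 0 else (((Real.sqrt (μ i))⁻¹ : ℝ) : ℂ) with hgdef
  have hgstar : star g = g := by
    funext i
    simp only [Pi.star_apply, hgdef]
    split <;> simp
  have hfun1 : ∀ i, g i * ((μ i : ℝ) : ℂ) = ((Real.sqrt (μ i) : ℝ) : ℂ) := by
    intro i
    rw [hgdef]
    simp only []
    split
    · rename_i h; simp [h]
    · rename_i h
      have hms : Real.sqrt (μ i) * Real.sqrt (μ i) = μ i := Real.mul_self_sqrt (hμ0 i)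
      have hpos := Real.sqrt_pos.mpr (lt_of_le_of_ne (hμ0 i) (Ne.symm h))
      have hs : Real.sqrt (μ i) ≠ 0 := ne_of_gt hpos
      push_cast
      field_simp
      exact_mod_cast (Real.sq_sqrt (hμ0 i)).symm
  have hfun2 : ∀ i, g i * g i * ((μ i : ℝ) : ℂ) * (g i * g i) = g i * g i := by
    intro i
    rw [hgdef]
    simp only []
    split
    · rename_i h; simp
    · rename_i h
      have hms : Real.sqrt (μ i) * Real.sqrt (μ i) = μ i := Real.mul_self_sqrt (hμ0 i)
      have hpos := Real.sqrt_pos.mpr (lt_of_le_of_ne (hμ0 i) (Ne.symm h))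
      have hs : Real.sqrt (μ i) ≠ 0 := ne_of_gt hpos
      push_cast
      field_simp
      exact_mod_cast (Real.sq_sqrt (hμ0 i)).symm
  obtain ⟨C, hCdef⟩ : ∃ C', C' = U * Matrix.diagonal g * Uᴴ := ⟨_, rfl⟩
  have hCherm : Cᴴ = C := by
    rw [hCdef, Matrix.conjTranspose_mul, Matrix.conjTranspose_mul,
      Matrix.diagonal_conjTranspose, hgstar, Matrix.conjTranspose_conjTranspose, mul_assoc]
  have hCB : C * (Aᴴ * A) = U * Matrix.diagonal (RCLike.ofReal ∘ Real.sqrt ∘ μ) * Uᴴ := by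
    rw [hspec, hCdef]
    calc U * Matrix.diagonal g * Uᴴ * (U * Matrix.diagonal (RCLike.ofReal ∘ μ) * Uᴴ)
        = U * ((Matrix.diagonal g * (Uᴴ * U)) * (Matrix.diagonal (RCLike.ofReal ∘ μ) * Uᴴ)) := by
          noncomm_ring
      _ = U * (Matrix.diagonal g * Matrix.diagonal (RCLike.ofReal ∘ μ)) * Uᴴ := by
          rw [hUU, mul_one]; noncomm_ring
      _ = U * Matrix.diagonal (RCLike.ofReal ∘ Real.sqrt ∘ μ) * Uᴴ := by
          rw [Matrix.diagonal_mul_diagonal]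
          exact congrArg (fun D => U * D * Uᴴ) (congrArg Matrix.diagonal (funext fun i => hfun1 i))
  refine ⟨A * C, ?_, ?_⟩
  · have h1 : (A * C)ᴴ * A = C * (Aᴴ * A) := by
      rw [Matrix.conjTranspose_mul, hCherm, Matrix.mul_assoc]
    rw [h1, hCB]
    rfl
  · intro u
    obtain ⟨Q, hQdef⟩ : ∃ Q', Q' = C * C := ⟨_, rfl⟩
    have hQU : Q = U * Matrix.diagonal (g * g) * Uᴴ := by
      rw [hQdef, hCdef]
      calc U * Matrix.diagonal g * Uᴴ * (U * Matrix.diagonal g * Uᴴ)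
          = U * ((Matrix.diagonal g * (Uᴴ * U)) * (Matrix.diagonal g * Uᴴ)) := by noncomm_ring
        _ = U * (Matrix.diagonal g * Matrix.diagonal g) * Uᴴ := by
            rw [hUU, mul_one]; noncomm_ring
        _ = U * Matrix.diagonal (g * g) * Uᴴ := by rw [Matrix.diagonal_mul_diagonal]; rfl
    have e1 : Q * (Aᴴ * A) * Q = Q := by
      rw [hspec, hQU]
      calc U * Matrix.diagonal (g * g) * Uᴴ * (U * Matrix.diagonal (RCLike.ofReal ∘ μ) * Uᴴ) *
            (U * Matrix.diagonal (g * g) * Uᴴ)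
          = U * ((Matrix.diagonal (g * g) * (Uᴴ * U)) * ((Matrix.diagonal (RCLike.ofReal ∘ μ) *
              (Uᴴ * U)) * (Matrix.diagonal (g * g) * Uᴴ))) := by noncomm_ring
        _ = U * (Matrix.diagonal (g * g) * Matrix.diagonal (RCLike.ofReal ∘ μ) *
              Matrix.diagonal (g * g)) * Uᴴ := by rw [hUU, mul_one, mul_one]; noncomm_ring
        _ = U * Matrix.diagonal (g * g) * Uᴴ := by
            rw [Matrix.diagonal_mul_diagonal, Matrix.diagonal_mul_diagonal]
            exact congrArg (fun D => U * D * Uᴴ) (congrArg Matrix.diagonal (funext fun i => hfun2 i))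
    obtain ⟨P, hPdef⟩ : ∃ P', P' = A * Q * Aᴴ := ⟨_, rfl⟩
    have hXX : (A * C) * (A * C)ᴴ = P := by
      rw [hPdef, hQdef, Matrix.conjTranspose_mul, hCherm]
      simp only [Matrix.mul_assoc]
    have hPherm : Pᴴ = P := by
      rw [hPdef, hQdef]
      simp only [Matrix.conjTranspose_mul, Matrix.conjTranspose_conjTranspose, hCherm]
      simp only [Matrix.mul_assoc]
    have hPP : P * P = P := by
      calc P * P = A * ((Q * (Aᴴ * A) * Q) * Aᴴ) := by rw [hPdef]; simp only [Matrix.mul_assoc]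
        _ = A * Q * Aᴴ := by rw [e1, Matrix.mul_assoc]
        _ = P := hPdef.symm
    have key : dotProduct (star ((A * C)ᴴ *ᵥ u)) ((A * C)ᴴ *ᵥ u)
        = dotProduct (star u) (P *ᵥ u) := by
      rw [Matrix.star_mulVec, Matrix.conjTranspose_conjTranspose, ← dotProduct_mulVec,
        Matrix.mulVec_mulVec, hXX]
    have key2 : dotProduct (star (P *ᵥ u)) (P *ᵥ u)
        = dotProduct (star u) (P *ᵥ u) := by
      rw [Matrix.star_mulVec, hPherm, ← dotProduct_mulVec, Matrix.mulVec_mulVec, hPP]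
    have h0 : 0 ≤ (dotProduct (star (P *ᵥ u)) (P *ᵥ u)).re := dot_self_nonneg _
    have h1 : 0 ≤ (dotProduct (star u) u).re := dot_self_nonneg u
    have hcs := cs_dot u (P *ᵥ u)
    have hre : (dotProduct (star u) (P *ᵥ u)).re
        ≤ ‖dotProduct (star u) (P *ᵥ u)‖ := Complex.re_le_norm _
    rw [key, ← key2]
    have hsq1 := Real.sq_sqrt h0
    have hsq2 := Real.sq_sqrt h1
    have hs1 := Real.sqrt_nonneg ((dotProduct (star (P *ᵥ u)) (P *ᵥ u)).re)
    have hs2 := Real.sqrt_nonneg ((dotProduct (star u) u).re)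
    have hq : (dotProduct (star (P *ᵥ u)) (P *ᵥ u)).re
        = (dotProduct (star u) (P *ᵥ u)).re := congrArg Complex.re key2
    nlinarith [hcs, hre, hsq1, hsq2, hs1, hs2, hq]
open Matrix
lemma trace_dual_sum {m n : Type*} [Fintype m] [Fintype n] [DecidableEq n] {K : ℕ}
    (A : Matrix m n ℂ) (X : Matrix m n ℂ) (c : Fin K → ℝ) (u : Fin K → m → ℂ) (v : Fin K → n → ℂ)
    (hA : ∀ i j, A i j = ∑ k, (c k : ℂ) * (u k i * star (v k j))) :
    (Xᴴ * A).trace = ∑ k, (c k : ℂ) * (dotProduct (star (v k)) (Xᴴ *ᵥ (u k))) := by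
  calc (Xᴴ * A).trace = ∑ j, ∑ i, star (X i j) * A i j := by
        simp [Matrix.trace, Matrix.diag, Matrix.mul_apply, Matrix.conjTranspose_apply]
    _ = ∑ j, ∑ i, ∑ k, (c k : ℂ) * (star (X i j) * u k i * star (v k j)) := by
        refine Finset.sum_congr rfl fun j _ => Finset.sum_congr rfl fun i _ => ?_
        rw [hA, Finset.mul_sum]
        exact Finset.sum_congr rfl fun k _ => by ring
    _ = ∑ j, ∑ k, ∑ i, (c k : ℂ) * (star (X i j) * u k i * star (v k j)) :=
        Finset.sum_congr rfl fun j _ => Finset.sum_comm ..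
    _ = ∑ k, ∑ j, ∑ i, (c k : ℂ) * (star (X i j) * u k i * star (v k j)) :=
        Finset.sum_comm ..
    _ = ∑ k, (c k : ℂ) * (dotProduct (star (v k)) (Xᴴ *ᵥ (u k))) := by
        refine Finset.sum_congr rfl fun k _ => ?_
        simp only [dotProduct, Matrix.mulVec, Matrix.conjTranspose_apply, Pi.star_apply,
          Finset.mul_sum, dotProduct]
        exact Finset.sum_congr rfl fun j _ => Finset.sum_congr rfl fun i _ => by ring

lemma traceNorm_le_of_rep {m n : Type*} [Fintype m] [Fintype n] [DecidableEq n] {K : ℕ}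
    (A : Matrix m n ℂ) (c : Fin K → ℝ) (u : Fin K → m → ℂ) (v : Fin K → n → ℂ)
    (hc : ∀ k, 0 ≤ c k)
    (hA : ∀ i j, A i j = ∑ k, (c k : ℂ) * (u k i * star (v k j))) :
    traceNorm A ≤ ∑ k, c k *
      (Real.sqrt (dotProduct (star (u k)) (u k)).re *
        Real.sqrt (dotProduct (star (v k)) (v k)).re) := by
  obtain ⟨X, hX1, hX2⟩ := exists_dual A
  have ht : traceNorm A = ((Xᴴ * A).trace).re := by unfold traceNorm; rw [hX1]
  rw [ht, trace_dual_sum A X c u v hA, Complex.re_sum]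
  refine Finset.sum_le_sum fun k _ => ?_
  rw [Complex.re_ofReal_mul]
  refine mul_le_mul_of_nonneg_left ?_ (hc k)
  calc (dotProduct (star (v k)) (Xᴴ *ᵥ u k)).re
      ≤ ‖dotProduct (star (v k)) (Xᴴ *ᵥ u k)‖ := Complex.re_le_norm _
    _ ≤ Real.sqrt (dotProduct (star (v k)) (v k)).re *
        Real.sqrt (dotProduct (star (Xᴴ *ᵥ u k)) (Xᴴ *ᵥ u k)).re :=
        cs_dot (v k) (Xᴴ *ᵥ u k)
    _ ≤ Real.sqrt (dotProduct (star (v k)) (v k)).re *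
        Real.sqrt (dotProduct (star (u k)) (u k)).re :=
        mul_le_mul_of_nonneg_left (Real.sqrt_le_sqrt (hX2 (u k))) (Real.sqrt_nonneg _)
    _ = _ := mul_comm _ _

noncomputable def matE {d : ℕ} (M : Matrix (Fin d) (Fin d) ℂ) :
    EuclideanSpace ℂ (Fin d × Fin d) :=
  (WithLp.equiv 2 ((Fin d × Fin d) → ℂ)).symm (fun p => M p.1 p.2)

lemma inner_matE {d : ℕ} (M N : Matrix (Fin d) (Fin d) ℂ) :
    inner (𝕜 := ℂ) (matE M) (matE N) = (Mᴴ * N).trace := by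
  rw [matE, matE, EuclideanSpace.inner_piLp_equiv_symm]
  simp only [dotProduct, Matrix.trace, Matrix.diag, Matrix.mul_apply,
    Matrix.conjTranspose_apply, Pi.star_apply, Fintype.sum_prod_type]
  rw [Finset.sum_comm]

lemma bessel_bound {d : ℕ} (hd : 1 ≤ d) {κ : ℝ} (hκ : 0 < κ)
    (G : Fin (d ^ 2 - 1) → Matrix (Fin d) (Fin d) ℂ)
    (hGtr : ∀ i, (G i).trace = 0)
    (hGorth : ∀ i j, ((G i)ᴴ * G j).trace = if i = j then (κ : ℂ) else 0)
    (σ : Matrix (Fin d) (Fin d) ℂ) (hherm : σᴴ = σ) (htr : σ.trace = 1)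
    (hpure : σ * σ = σ) :
    ∑ i, Complex.normSq (((G i)ᴴ * σ).trace) ≤ κ * (1 - 1 / d) := by
  have hdpos : (0 : ℝ) < d := by exact_mod_cast Nat.lt_of_lt_of_le Nat.zero_lt_one hd
  have hsd : Real.sqrt d ≠ 0 := ne_of_gt (Real.sqrt_pos.mpr hdpos)
  have hsκ : Real.sqrt κ ≠ 0 := ne_of_gt (Real.sqrt_pos.mpr hκ)
  have htr1 : (1 : Matrix (Fin d) (Fin d) ℂ).trace = (d : ℂ) := by
    simp [Matrix.trace_one]
  set e : Option (Fin (d ^ 2 - 1)) → EuclideanSpace ℂ (Fin d × Fin d) :=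
    fun k => matE (Option.rec ((((Real.sqrt d)⁻¹ : ℝ) : ℂ) • (1 : Matrix (Fin d) (Fin d) ℂ))
      (fun i => (((Real.sqrt κ)⁻¹ : ℝ) : ℂ) • G i) k) with hedef
  have hON : Orthonormal ℂ e := by
    rw [orthonormal_iff_ite]
    intro k l
    cases k with
    | none => cases l with
      | none =>
        show inner (𝕜 := ℂ) (matE _) (matE _) = _
        rw [inner_matE]
        rw [Matrix.conjTranspose_smul, Matrix.smul_mul, Matrix.mul_smul, Matrix.conjTranspose_one,
          one_mul, Matrix.trace_smul, Matrix.trace_smul, htr1]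
        simp only [smul_eq_mul]
        rw [if_pos trivial, RCLike.star_def, Complex.conj_ofReal]
        have hc : ((Real.sqrt d : ℝ) : ℂ) ≠ 0 := by exact_mod_cast hsd
        field_simp
        have h' : (1 / √(d:ℝ)) ^ 2 * d = 1 := by
          rw [div_pow, Real.sq_sqrt hdpos.le]; field_simp
        exact_mod_cast h'
      | some j =>
        show inner (𝕜 := ℂ) (matE _) (matE _) = _
        rw [inner_matE]
        rw [Matrix.conjTranspose_smul, Matrix.smul_mul, Matrix.mul_smul, Matrix.conjTranspose_one,
          one_mul, Matrix.trace_smul, Matrix.trace_smul, hGtr j]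
        simp
    | some i => cases l with
      | none =>
        show inner (𝕜 := ℂ) (matE _) (matE _) = _
        rw [inner_matE]
        rw [Matrix.conjTranspose_smul, Matrix.smul_mul, Matrix.mul_smul, mul_one,
          Matrix.trace_smul, Matrix.trace_smul, Matrix.trace_conjTranspose, hGtr i]
        simp
      | some j =>
        show inner (𝕜 := ℂ) (matE _) (matE _) = _
        rw [inner_matE]
        rw [Matrix.conjTranspose_smul, Matrix.smul_mul, Matrix.mul_smul,
          Matrix.trace_smul, Matrix.trace_smul, hGorth i j]
        simp only [smul_eq_mul]
        by_cases h : i = j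
        · subst h
          rw [if_pos rfl, if_pos rfl, RCLike.star_def, Complex.conj_ofReal]
          have hc : ((Real.sqrt κ : ℝ) : ℂ) ≠ 0 := by exact_mod_cast hsκ
          field_simp
          have h' : (1 / √κ) ^ 2 * κ = 1 := by
            rw [div_pow, Real.sq_sqrt hκ.le]; field_simp
          exact_mod_cast h'
        · rw [if_neg h, if_neg (by simpa using h)]
          simp
  have hb := hON.sum_inner_products_le (s := Finset.univ) (matE σ)
  have hnorm : ‖matE σ‖ ^ 2 = 1 := by
    rw [← inner_self_eq_norm_sq (𝕜 := ℂ), inner_matE, hherm, hpure, htr]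
    simp
  rw [hnorm, Fintype.sum_option] at hb
  have hnone : ‖inner (𝕜 := ℂ) (e none) (matE σ)‖ ^ 2 = 1 / d := by
    show ‖inner (𝕜 := ℂ) (matE _) (matE σ)‖ ^ 2 = _
    rw [inner_matE, Matrix.conjTranspose_smul, Matrix.smul_mul, Matrix.conjTranspose_one, one_mul,
      Matrix.trace_smul, htr]
    simp only [smul_eq_mul, mul_one]
    rw [RCLike.star_def, Complex.conj_ofReal, Complex.norm_real,
      Real.norm_eq_abs, abs_of_nonneg (inv_nonneg.mpr (Real.sqrt_nonneg _)), inv_pow,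
      Real.sq_sqrt hdpos.le, one_div]
  have hsome : ∀ i, ‖inner (𝕜 := ℂ) (e (some i)) (matE σ)‖ ^ 2
      = Complex.normSq (((G i)ᴴ * σ).trace) / κ := by
    intro i
    show ‖inner (𝕜 := ℂ) (matE _) (matE σ)‖ ^ 2 = _
    rw [inner_matE, Matrix.conjTranspose_smul, Matrix.smul_mul, Matrix.trace_smul]
    simp only [smul_eq_mul]
    rw [RCLike.star_def, Complex.conj_ofReal, norm_mul, Complex.norm_real,
      Real.norm_eq_abs, abs_of_nonneg (inv_nonneg.mpr (Real.sqrt_nonneg _)), mul_pow, inv_pow,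
      Real.sq_sqrt hκ.le, Complex.sq_norm]
    ring
  rw [hnone] at hb
  have hsum : ∑ i, ‖inner (𝕜 := ℂ) (e (some i)) (matE σ)‖ ^ 2
      = (∑ i, Complex.normSq (((G i)ᴴ * σ).trace)) / κ := by
    rw [Finset.sum_div]
    exact Finset.sum_congr rfl fun i _ => hsome i
  rw [hsum] at hb
  have h2 : (∑ i, Complex.normSq (((G i)ᴴ * σ).trace)) / κ ≤ 1 - 1 / d := by linarith
  calc (∑ i, Complex.normSq (((G i)ᴴ * σ).trace))
      = ((∑ i, Complex.normSq (((G i)ᴴ * σ).trace)) / κ) * κ := by field_simp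
    _ ≤ (1 - 1 / d) * κ := mul_le_mul_of_nonneg_right h2 hκ.le
    _ = κ * (1 - 1 / d) := by ring

lemma kron_trace_extract (dA dB : ℕ) (κA κB : ℝ)
    (GA : Fin (dA ^ 2 - 1) → Matrix (Fin dA) (Fin dA) ℂ)
    (GB : Fin (dB ^ 2 - 1) → Matrix (Fin dB) (Fin dB) ℂ)
    (hGAtr : ∀ i, (GA i).trace = 0)
    (hGAorth : ∀ i j, ((GA i)ᴴ * GA j).trace = if i = j then (κA : ℂ) else 0)
    (hGBtr : ∀ i, (GB i).trace = 0)
    (hGBorth : ∀ i j, ((GB i)ᴴ * GB j).trace = if i = j then (κB : ℂ) else 0)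
    (TA : Fin (dA ^ 2 - 1) → ℂ) (TB : Fin (dB ^ 2 - 1) → ℂ)
    (TAB : Matrix (Fin (dA ^ 2 - 1)) (Fin (dB ^ 2 - 1)) ℂ)
    (i : Fin (dA ^ 2 - 1)) (j : Fin (dB ^ 2 - 1)) :
    ((((1 : Matrix (Fin dA) (Fin dA) ℂ) ⊗ₖ (1 : Matrix (Fin dB) (Fin dB) ℂ))
        + (∑ i, TA i • (GA i ⊗ₖ (1 : Matrix (Fin dB) (Fin dB) ℂ)))
        + (∑ j, TB j • ((1 : Matrix (Fin dA) (Fin dA) ℂ) ⊗ₖ GB j))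
        + (∑ i, ∑ j, TAB i j • (GA i ⊗ₖ GB j))) * ((GA i)ᴴ ⊗ₖ (GB j)ᴴ)).trace
      = (κA : ℂ) * κB * TAB i j := by
  have hgbtr : ∀ j, ((GB j)ᴴ).trace = 0 := by
    intro j; rw [Matrix.trace_conjTranspose, hGBtr j, star_zero]
  have hgatr : ∀ i, ((GA i)ᴴ).trace = 0 := by
    intro i; rw [Matrix.trace_conjTranspose, hGAtr i, star_zero]
  rw [Matrix.add_mul, Matrix.add_mul, Matrix.add_mul, Matrix.trace_add, Matrix.trace_add,
    Matrix.trace_add]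
  have t1 : (((1 : Matrix (Fin dA) (Fin dA) ℂ) ⊗ₖ (1 : Matrix (Fin dB) (Fin dB) ℂ))
      * ((GA i)ᴴ ⊗ₖ (GB j)ᴴ)).trace = 0 := by
    rw [← Matrix.mul_kronecker_mul, Matrix.trace_kronecker, one_mul, one_mul, hgatr, zero_mul]
  have t2 : ((∑ k, TA k • (GA k ⊗ₖ (1 : Matrix (Fin dB) (Fin dB) ℂ)))
      * ((GA i)ᴴ ⊗ₖ (GB j)ᴴ)).trace = 0 := by
    rw [Finset.sum_mul, Matrix.trace_sum]
    refine Finset.sum_eq_zero fun k _ => ?_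
    rw [smul_mul_assoc, Matrix.trace_smul, ← Matrix.mul_kronecker_mul, Matrix.trace_kronecker,
      one_mul, hgbtr, mul_zero, smul_zero]
  have t3 : ((∑ l, TB l • ((1 : Matrix (Fin dA) (Fin dA) ℂ) ⊗ₖ GB l))
      * ((GA i)ᴴ ⊗ₖ (GB j)ᴴ)).trace = 0 := by
    rw [Finset.sum_mul, Matrix.trace_sum]
    refine Finset.sum_eq_zero fun l _ => ?_
    rw [smul_mul_assoc, Matrix.trace_smul, ← Matrix.mul_kronecker_mul, Matrix.trace_kronecker,
      one_mul, hgatr, zero_mul, smul_zero]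
  have t4 : ((∑ k, ∑ l, TAB k l • (GA k ⊗ₖ GB l)) * ((GA i)ᴴ ⊗ₖ (GB j)ᴴ)).trace
      = (κA : ℂ) * κB * TAB i j := by
    rw [Finset.sum_mul, Matrix.trace_sum]
    have hinner : ∀ k, ((∑ l, TAB k l • (GA k ⊗ₖ GB l)) * ((GA i)ᴴ ⊗ₖ (GB j)ᴴ)).trace
        = ∑ l, TAB k l * ((if i = k then (κA : ℂ) else 0) * (if j = l then (κB : ℂ) else 0)) := by
      intro k
      rw [Finset.sum_mul, Matrix.trace_sum]
      refine Finset.sum_congr rfl fun l _ => ?_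
      rw [smul_mul_assoc, Matrix.trace_smul, ← Matrix.mul_kronecker_mul, Matrix.trace_kronecker,
        Matrix.trace_mul_comm (GA k) ((GA i)ᴴ), Matrix.trace_mul_comm (GB l) ((GB j)ᴴ),
        hGAorth i k, hGBorth j l, smul_eq_mul]
    simp only [hinner]
    simp only [mul_ite, ite_mul, mul_zero, zero_mul, Finset.sum_ite_eq, Finset.mem_univ,
      if_true]
    ring
  rw [t1, t2, t3, t4, zero_add, zero_add, zero_add]

lemma dot_self_re {n : Type*} [Fintype n] (x : n → ℂ) :
    (dotProduct (star x) x).re = ∑ i, Complex.normSq (x i) := by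
  simp only [dotProduct, Pi.star_apply, Complex.re_sum]
  refine Finset.sum_congr rfl fun i _ => ?_
  simp only [Complex.mul_re, Complex.normSq_apply, Complex.star_def, Complex.conj_re,
    Complex.conj_im]
  ring

/-- If the bipartite state `ρ` is separable, then the trace norm of its
correlation tensor satisfies `‖T^{(AB)}‖_tr ≤ √(((d_A²−d_A)/κ_A)·((d_B²−d_B)/κ_B))`;
in particular for `κ_A = κ_B = 2` this is de Vicente's bound
`√(d_A d_B (d_A−1)(d_B−1)/4)`. -/
theorem stmt_3
    (dA dB : ℕ) (hdA : 1 ≤ dA) (hdB : 1 ≤ dB)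
    (κA κB : ℝ) (hκA : 0 < κA) (hκB : 0 < κB)
    (GA : Fin (dA ^ 2 - 1) → Matrix (Fin dA) (Fin dA) ℂ)
    (GB : Fin (dB ^ 2 - 1) → Matrix (Fin dB) (Fin dB) ℂ)
    (hGAtr : ∀ i, (GA i).trace = 0)
    (hGAorth : ∀ i j, ((GA i)ᴴ * GA j).trace = if i = j then (κA : ℂ) else 0)
    (hGBtr : ∀ i, (GB i).trace = 0)
    (hGBorth : ∀ i j, ((GB i)ᴴ * GB j).trace = if i = j then (κB : ℂ) else 0)
    (ρ : Matrix (Fin dA × Fin dB) (Fin dA × Fin dB) ℂ)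
    (hρ : ρ.PosSemidef) (hρtr : ρ.trace = 1)
    (TA : Fin (dA ^ 2 - 1) → ℂ) (TB : Fin (dB ^ 2 - 1) → ℂ)
    (TAB : Matrix (Fin (dA ^ 2 - 1)) (Fin (dB ^ 2 - 1)) ℂ)
    (hrep : ρ = (((dA : ℂ) * dB))⁻¹ •
      ((1 : Matrix (Fin dA) (Fin dA) ℂ) ⊗ₖ (1 : Matrix (Fin dB) (Fin dB) ℂ)
        + ∑ i, TA i • (GA i ⊗ₖ (1 : Matrix (Fin dB) (Fin dB) ℂ))
        + ∑ j, TB j • ((1 : Matrix (Fin dA) (Fin dA) ℂ) ⊗ₖ GB j)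
        + ∑ i, ∑ j, TAB i j • (GA i ⊗ₖ GB j)))
    (hsep : ∃ (M : ℕ) (w : Fin M → ℝ)
        (σ : Fin M → Matrix (Fin dA) (Fin dA) ℂ)
        (τ : Fin M → Matrix (Fin dB) (Fin dB) ℂ),
      (∀ i, 0 ≤ w i) ∧ (∑ i, w i = 1) ∧
      (∀ i, (σ i).PosSemidef ∧ (σ i).trace = 1 ∧ σ i * σ i = σ i) ∧
      (∀ i, (τ i).PosSemidef ∧ (τ i).trace = 1 ∧ τ i * τ i = τ i) ∧
      ρ = ∑ i, (w i : ℂ) • (σ i ⊗ₖ τ i))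
    :
    traceNorm TAB ≤
        Real.sqrt ((((dA : ℝ) ^ 2 - dA) / κA) * (((dB : ℝ) ^ 2 - dB) / κB)) ∧
      (κA = 2 → κB = 2 →
        traceNorm TAB ≤
          Real.sqrt ((dA : ℝ) * dB * ((dA : ℝ) - 1) * ((dB : ℝ) - 1) / 4)) := by
  obtain ⟨M, w, σ, τ, hw0, hw1, hps, hpt, hsepeq⟩ := hsep
  have hdA0 : (0 : ℝ) < dA := by exact_mod_cast Nat.lt_of_lt_of_le Nat.zero_lt_one hdA
  have hdB0 : (0 : ℝ) < dB := by exact_mod_cast Nat.lt_of_lt_of_le Nat.zero_lt_one hdB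
  have hdAC : (dA : ℂ) ≠ 0 := by exact_mod_cast ne_of_gt (show (0:ℝ) < dA from hdA0)
  have hdBC : (dB : ℂ) ≠ 0 := by exact_mod_cast ne_of_gt (show (0:ℝ) < dB from hdB0)
  have hκAC : (κA : ℂ) ≠ 0 := by exact_mod_cast ne_of_gt hκA
  have hκBC : (κB : ℂ) ≠ 0 := by exact_mod_cast ne_of_gt hκB
  -- extraction of the correlation tensor
  have key : ∀ i j, (κA : ℂ) * κB * TAB i j
      = ((dA : ℂ) * dB) * ∑ k, (w k : ℂ) *
          ((((GA i)ᴴ * σ k).trace) * (((GB j)ᴴ * τ k).trace)) := by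
    intro i j
    have e1 : (ρ * ((GA i)ᴴ ⊗ₖ (GB j)ᴴ)).trace
        = (((dA : ℂ) * dB))⁻¹ * ((κA : ℂ) * κB * TAB i j) := by
      rw [hrep, Matrix.smul_mul, Matrix.trace_smul, smul_eq_mul]
      congr 1
      exact kron_trace_extract dA dB κA κB GA GB hGAtr hGAorth hGBtr hGBorth TA TB TAB i j
    have e2 : (ρ * ((GA i)ᴴ ⊗ₖ (GB j)ᴴ)).trace
        = ∑ k, (w k : ℂ) * ((((GA i)ᴴ * σ k).trace) * (((GB j)ᴴ * τ k).trace)) := by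
      rw [hsepeq, Finset.sum_mul, Matrix.trace_sum]
      refine Finset.sum_congr rfl fun k _ => ?_
      rw [smul_mul_assoc, Matrix.trace_smul, ← Matrix.mul_kronecker_mul,
        Matrix.trace_kronecker, smul_eq_mul, Matrix.trace_mul_comm (σ k) ((GA i)ᴴ),
        Matrix.trace_mul_comm (τ k) ((GB j)ᴴ)]
    rw [e2] at e1
    field_simp at e1
    rw [← e1]
    ring
  -- apply the rank-one decomposition bound
  have hbound := traceNorm_le_of_rep TAB
    (fun k => w k * ((dA * dB : ℝ) / (κA * κB)))
    (fun k i => ((GA i)ᴴ * σ k).trace)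
    (fun k j => star (((GB j)ᴴ * τ k).trace))
    (fun k => mul_nonneg (hw0 k) (by positivity))
    (by
      intro i j
      have hk := key i j
      have hstep : ∑ k, ((w k * ((dA * dB : ℝ) / (κA * κB)) : ℝ) : ℂ) *
            (((GA i)ᴴ * σ k).trace * star (star (((GB j)ᴴ * τ k).trace)))
          = ((dA : ℂ) * dB / ((κA : ℂ) * κB)) *
              ∑ k, (w k : ℂ) * ((((GA i)ᴴ * σ k).trace) * (((GB j)ᴴ * τ k).trace)) := by
        rw [Finset.mul_sum]
        refine Finset.sum_congr rfl fun k _ => ?_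
        rw [star_star]
        push_cast
        ring
      rw [hstep, div_mul_eq_mul_div, eq_div_iff (mul_ne_zero hκAC hκBC)]
      linear_combination hk)
  -- bound each summand
  set KA : ℝ := Real.sqrt (κA * (1 - 1 / dA)) with hKAdef
  set KB : ℝ := Real.sqrt (κB * (1 - 1 / dB)) with hKBdef
  have hterm : ∀ k : Fin M, w k * ((dA * dB : ℝ) / (κA * κB)) *
      (Real.sqrt (dotProduct (star (fun i => ((GA i)ᴴ * σ k).trace))
          (fun i => ((GA i)ᴴ * σ k).trace)).re *
        Real.sqrt (dotProduct (star (fun j => star (((GB j)ᴴ * τ k).trace)))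
          (fun j => star (((GB j)ᴴ * τ k).trace))).re)
      ≤ w k * ((dA * dB : ℝ) / (κA * κB)) * (KA * KB) := by
    intro k
    refine mul_le_mul_of_nonneg_left ?_ (mul_nonneg (hw0 k) (by positivity))
    have hA1 : (dotProduct (star (fun i => ((GA i)ᴴ * σ k).trace))
        (fun i => ((GA i)ᴴ * σ k).trace)).re ≤ κA * (1 - 1 / dA) := by
      rw [dot_self_re]
      exact bessel_bound hdA hκA GA hGAtr hGAorth (σ k) (hps k).1.1 (hps k).2.1 (hps k).2.2
    have hB1 : (dotProduct (star (fun j => star (((GB j)ᴴ * τ k).trace)))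
        (fun j => star (((GB j)ᴴ * τ k).trace))).re ≤ κB * (1 - 1 / dB) := by
      rw [dot_self_re]
      have : ∀ j, Complex.normSq (star (((GB j)ᴴ * τ k).trace))
          = Complex.normSq ((((GB j)ᴴ * τ k).trace)) := fun j => by
        rw [Complex.star_def, Complex.normSq_conj]
      rw [Finset.sum_congr rfl fun j _ => this j]
      exact bessel_bound hdB hκB GB hGBtr hGBorth (τ k) (hpt k).1.1 (hpt k).2.1 (hpt k).2.2
    exact mul_le_mul (Real.sqrt_le_sqrt hA1) (Real.sqrt_le_sqrt hB1)
      (Real.sqrt_nonneg _) (Real.sqrt_nonneg _)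
  have hsumbound : traceNorm TAB ≤ (dA * dB : ℝ) / (κA * κB) * (KA * KB) := by
    refine le_trans hbound (le_trans (Finset.sum_le_sum fun k _ => hterm k) ?_)
    have : ∑ k : Fin M, w k * ((dA * dB : ℝ) / (κA * κB)) * (KA * KB)
        = (∑ k : Fin M, w k) * ((dA * dB : ℝ) / (κA * κB) * (KA * KB)) := by
      rw [Finset.sum_mul]
      exact Finset.sum_congr rfl fun k _ => by ring
    rw [this, hw1, one_mul]
  -- identify the right-hand side
  have hrhs : (dA * dB : ℝ) / (κA * κB) * (KA * KB)
      = Real.sqrt ((((dA : ℝ) ^ 2 - dA) / κA) * (((dB : ℝ) ^ 2 - dB) / κB)) := by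
    have hx : (0:ℝ) ≤ κA * (1 - 1 / dA) := by
      have : (1:ℝ) ≤ (dA:ℝ) := by exact_mod_cast hdA
      have h1 : (1:ℝ)/dA ≤ 1 := by rw [div_le_one hdA0]; exact this
      nlinarith
    have hy : (0:ℝ) ≤ κB * (1 - 1 / dB) := by
      have : (1:ℝ) ≤ (dB:ℝ) := by exact_mod_cast hdB
      have h1 : (1:ℝ)/dB ≤ 1 := by rw [div_le_one hdB0]; exact this
      nlinarith
    have hq0 : (0:ℝ) ≤ (dA * dB : ℝ) / (κA * κB) := by positivity
    have harg : (((dA : ℝ) ^ 2 - dA) / κA) * (((dB : ℝ) ^ 2 - dB) / κB)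
        = ((dA * dB : ℝ) / (κA * κB))^2 * ((κA * (1 - 1 / dA)) * (κB * (1 - 1 / dB))) := by
      field_simp
    rw [harg, Real.sqrt_mul (sq_nonneg _), Real.sqrt_sq hq0,
      Real.sqrt_mul hx, hKAdef, hKBdef]
  constructor
  · rw [← hrhs]; exact hsumbound
  · intro h2A h2B
    have : Real.sqrt ((((dA : ℝ) ^ 2 - dA) / κA) * (((dB : ℝ) ^ 2 - dB) / κB))
        = Real.sqrt ((dA : ℝ) * dB * ((dA : ℝ) - 1) * ((dB : ℝ) - 1) / 4) := by
      rw [h2A, h2B]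
      congr 1
      ring
    rw [← this, ← hrhs]
    exact hsumbound
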